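/- arXiv:2209.14766 — 4 statements merged into one kernel-verified Lean document; each statement's English description precedes it below -/
import Mathlib

section
/- If U and V are independent random variables where U is Gamma(N_R, 1)-distributed and V is Gamma(N_T, 1)-distributed (with N_T, N_R positive integers), then the product X = U·V has probability density f_X(x) = 2 x^{(N_T+N_R)/2 − 1} K_τ(2√x) / (Γ(N_T)Γ(N_R)) for x > 0, where τ = |N_T − N_R| and K_τ is the modified Bessel function of the second kind of order τ. -/
open MeasureTheory ProbabilityTheory

/-- The modified Bessel function of the second kind, via its standard integral
representation `K_ν(x) = ∫₀^∞ exp(-x cosh t) cosh(ν t) dt` (valid for `x > 0`). -/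
noncomputable def besselK (ν x : ℝ) : ℝ :=
  ∫ t in Set.Ioi (0 : ℝ), Real.exp (-x * Real.cosh t) * Real.cosh (ν * t)

section Aux
open Real Set
open scoped ENNReal

lemma exp_arg_le (ν c t : ℝ) (hc : 0 < c) :
    ν * t - c * Real.cosh t ≤ 2 * (|ν| + 1) ^ 2 / c - |t| := by
  set s := |t| with hs
  have hs0 : 0 ≤ s := abs_nonneg t
  have h1 : ν * t ≤ |ν| * s := by
    calc ν * t ≤ |ν * t| := le_abs_self _
    _ = |ν| * s := abs_mul ν t
  have hes : Real.exp s = Real.exp (s/2) * Real.exp (s/2) := by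
    rw [← Real.exp_add]; ring_nf
  have h2 : s ^ 2 / 4 ≤ Real.exp s := by
    have h := Real.add_one_le_exp (s/2)
    nlinarith [Real.exp_nonneg (s/2)]
  have h3 : s ^ 2 / 8 ≤ Real.cosh t := by
    rw [← Real.cosh_abs, ← hs, Real.cosh_eq]
    have := Real.exp_nonneg (-s)
    nlinarith
  have key : (|ν| + 1) * s - c / 8 * s ^ 2 ≤ 2 * (|ν| + 1) ^ 2 / c := by
    rw [le_div_iff₀ hc]
    nlinarith [sq_nonneg (c * s - 4 * (|ν| + 1))]
  have h4 : c * (s ^ 2 / 8) ≤ c * Real.cosh t := mul_le_mul_of_nonneg_left h3 hc.le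
  nlinarith [abs_nonneg ν]

lemma integrable_exp_neg_abs' : Integrable (fun t : ℝ => Real.exp (-|t|)) := by
  have h1 : IntegrableOn (fun t : ℝ => Real.exp (-|t|)) (Iic 0) := by
    apply (integrableOn_exp_Iic 0).congr_fun ?_ measurableSet_Iic
    intro t ht
    simp only [mem_Iic] at ht
    show Real.exp t = Real.exp (-|t|)
    rw [abs_of_nonpos ht, neg_neg]
  have h2 : IntegrableOn (fun t : ℝ => Real.exp (-|t|)) (Ioi 0) := by
    apply (exp_neg_integrableOn_Ioi 0 one_pos).congr_fun ?_ measurableSet_Ioi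
    intro t ht
    show Real.exp (-1 * t) = Real.exp (-|t|)
    rw [abs_of_pos ht]; ring_nf
  have := h1.union h2
  rwa [Iic_union_Ioi, integrableOn_univ] at this

lemma integrable_exp_sub_cosh (ν c : ℝ) (hc : 0 < c) :
    Integrable (fun t : ℝ => Real.exp (ν * t - c * Real.cosh t)) := by
  have hint : Integrable (fun t : ℝ =>
      Real.exp (2 * (|ν| + 1) ^ 2 / c) * Real.exp (-|t|)) :=
    integrable_exp_neg_abs'.const_mul _
  refine hint.mono' ?_ ?_
  · exact (Continuous.rexp (by continuity)).aestronglyMeasurable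
  · filter_upwards with t
    rw [Real.norm_eq_abs, abs_of_pos (Real.exp_pos _), ← Real.exp_add]
    exact Real.exp_le_exp.mpr (by linarith [exp_arg_le ν c t hc])


lemma besselK_abs (ν x : ℝ) : besselK |ν| x = besselK ν x := by
  unfold besselK
  refine setIntegral_congr_fun measurableSet_Ioi fun t ht => ?_
  have : |ν| * t = |ν * t| := by
    rw [abs_mul, abs_of_pos (a := t) ht]
  rw [this, Real.cosh_abs]

lemma integral_exp_sub_cosh (ν c : ℝ) (hc : 0 < c) :
    ∫ t : ℝ, Real.exp (ν * t - c * Real.cosh t) = 2 * besselK ν c := by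
  have hi := integrable_exp_sub_cosh ν c hc
  have hin := integrable_exp_sub_cosh (-ν) c hc
  rw [← intervalIntegral.integral_Iic_add_Ioi (b := (0:ℝ)) hi.integrableOn hi.integrableOn]
  have hIic : ∫ t in Iic (0:ℝ), Real.exp (ν * t - c * Real.cosh t)
      = ∫ t in Ioi (0:ℝ), Real.exp (-ν * t - c * Real.cosh t) := by
    have h2 : ∫ t in Ioi (0:ℝ), Real.exp (-ν * t - c * Real.cosh t)
        = ∫ t in Ioi (0:ℝ), (fun t => Real.exp (ν * t - c * Real.cosh t)) (-t) := by
      refine setIntegral_congr_fun measurableSet_Ioi fun t _ => ?_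
      simp only [Real.cosh_neg]
      ring_nf
    have h3 := integral_comp_neg_Ioi (0:ℝ) (fun t => Real.exp (ν * t - c * Real.cosh t))
    rw [neg_zero] at h3
    rw [h2, h3]
  rw [hIic, ← integral_add (hin.integrableOn) (hi.integrableOn)]
  unfold besselK
  rw [← integral_const_mul]
  refine setIntegral_congr_fun measurableSet_Ioi fun t ht => ?_
  rw [Real.cosh_eq t, Real.cosh_eq (ν * t)]
  set C := c * ((Real.exp t + Real.exp (-t)) / 2) with hC
  rw [show -ν * t - C = -(ν * t) + -C by ring, show ν * t - C = ν * t + -C by ring,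
    Real.exp_add, Real.exp_add]
  rw [hC]; ring_nf


lemma sqrt_exp_image (x : ℝ) (hx : 0 < x) :
    (fun t : ℝ => Real.sqrt x * Real.exp t) '' univ = Ioi 0 := by
  have hs : 0 < Real.sqrt x := Real.sqrt_pos.mpr hx
  ext u
  simp only [image_univ, mem_range, mem_Ioi]
  constructor
  · rintro ⟨t, rfl⟩; positivity
  · intro hu
    exact ⟨Real.log (u / Real.sqrt x), by
      rw [Real.exp_log (by positivity), mul_div_cancel₀ _ hs.ne']⟩

lemma core_pointwise (ν x t : ℝ) (hx : 0 < x) :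
    |Real.sqrt x * Real.exp t| •
      ((Real.sqrt x * Real.exp t) ^ (ν - 1) *
        Real.exp (-(Real.sqrt x * Real.exp t + x / (Real.sqrt x * Real.exp t))))
      = x ^ (ν / 2) * Real.exp (ν * t - 2 * Real.sqrt x * Real.cosh t) := by
  have hs : 0 < Real.sqrt x := Real.sqrt_pos.mpr hx
  have hse : 0 < Real.sqrt x * Real.exp t := by positivity
  have hdiv : x / (Real.sqrt x * Real.exp t) = Real.sqrt x * Real.exp (-t) := by
    rw [div_mul_eq_div_div, Real.div_sqrt, Real.exp_neg, div_eq_mul_inv]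
  have h3 : Real.sqrt x * Real.exp t + Real.sqrt x * Real.exp (-t)
      = 2 * Real.sqrt x * Real.cosh t := by
    rw [Real.cosh_eq]; ring
  have h2 : x ^ (ν / 2) = Real.exp (Real.log (Real.sqrt x) * ν) := by
    rw [Real.rpow_def_of_pos hx, Real.log_sqrt hx.le]; ring_nf
  have h1 : Real.sqrt x * Real.exp t = Real.exp (Real.log (Real.sqrt x) + t) := by
    rw [Real.exp_add, Real.exp_log hs]
  rw [smul_eq_mul, abs_of_pos hse, Real.rpow_def_of_pos hse,
    Real.log_mul hs.ne' (Real.exp_ne_zero t), Real.log_exp, hdiv, h3, h2]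
  rw [h1, ← Real.exp_add, ← Real.exp_add, ← Real.exp_add]
  congr 1
  ring

lemma core_integrableOn (ν x : ℝ) (hx : 0 < x) :
    IntegrableOn (fun u : ℝ => u ^ (ν - 1) * Real.exp (-(u + x / u))) (Ioi 0) := by
  have hs : 0 < Real.sqrt x := Real.sqrt_pos.mpr hx
  have hder : ∀ t ∈ (univ : Set ℝ), HasDerivWithinAt (fun t => Real.sqrt x * Real.exp t)
      (Real.sqrt x * Real.exp t) univ t := fun t _ =>
    ((Real.hasDerivAt_exp t).const_mul (Real.sqrt x)).hasDerivWithinAt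
  have hinj : InjOn (fun t : ℝ => Real.sqrt x * Real.exp t) univ := fun a _ b _ h =>
    Real.exp_injective (mul_left_cancel₀ hs.ne' h)
  rw [← sqrt_exp_image x hx,
    integrableOn_image_iff_integrableOn_abs_deriv_smul MeasurableSet.univ hder hinj]
  rw [integrableOn_univ]
  have := (integrable_exp_sub_cosh ν (2 * Real.sqrt x) (by positivity)).const_mul (x ^ (ν / 2))
  refine this.congr ?_
  filter_upwards with t
  exact (core_pointwise ν x t hx).symm

lemma core_integral (ν x : ℝ) (hx : 0 < x) (J : ℝ)
    (hJ : ∫ t : ℝ, Real.exp (ν * t - 2 * Real.sqrt x * Real.cosh t) = J) :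
    ∫ u in Ioi (0:ℝ), u ^ (ν - 1) * Real.exp (-(u + x / u)) = x ^ (ν / 2) * J := by
  have hs : 0 < Real.sqrt x := Real.sqrt_pos.mpr hx
  have hder : ∀ t ∈ (univ : Set ℝ), HasDerivWithinAt (fun t => Real.sqrt x * Real.exp t)
      (Real.sqrt x * Real.exp t) univ t := fun t _ =>
    ((Real.hasDerivAt_exp t).const_mul (Real.sqrt x)).hasDerivWithinAt
  have hinj : InjOn (fun t : ℝ => Real.sqrt x * Real.exp t) univ := fun a _ b _ h =>
    Real.exp_injective (mul_left_cancel₀ hs.ne' h)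
  rw [← sqrt_exp_image x hx,
    integral_image_eq_integral_abs_deriv_smul MeasurableSet.univ hder hinj]
  rw [Measure.restrict_univ]
  calc ∫ t : ℝ, |Real.sqrt x * Real.exp t| •
        ((Real.sqrt x * Real.exp t) ^ (ν - 1) *
          Real.exp (-(Real.sqrt x * Real.exp t + x / (Real.sqrt x * Real.exp t))))
      = ∫ t : ℝ, x ^ (ν / 2) * Real.exp (ν * t - 2 * Real.sqrt x * Real.cosh t) := by
        congr 1; funext t; exact core_pointwise ν x t hx
    _ = x ^ (ν / 2) * J := by rw [integral_const_mul, hJ]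


lemma core_lintegral (ν x : ℝ) (hx : 0 < x) :
    ∫⁻ u in Ioi (0:ℝ), ENNReal.ofReal (u ^ (ν - 1) * Real.exp (-(u + x / u)))
      = ENNReal.ofReal (x ^ (ν / 2) * (2 * besselK ν (2 * Real.sqrt x))) := by
  rw [← ofReal_integral_eq_lintegral_ofReal (core_integrableOn ν x hx)
    ((ae_restrict_iff' measurableSet_Ioi).mpr (ae_of_all _ fun u (hu : u ∈ Ioi 0) => by
      have : (0:ℝ) < u := hu
      positivity))]
  rw [core_integral ν x hx _ (integral_exp_sub_cosh ν (2 * Real.sqrt x) (by positivity))]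

lemma real_algebra (a b u y : ℝ) (hu : 0 < u) (hy : 0 < y) :
    (1:ℝ) ^ a / Real.Gamma a * u ^ (a-1) * Real.exp (-(1*u)) * u⁻¹ *
      ((1:ℝ) ^ b / Real.Gamma b * (y/u) ^ (b-1) * Real.exp (-(1*(y/u))))
    = (1 / (Real.Gamma a * Real.Gamma b) * y ^ (b-1)) *
      (u ^ (a - b - 1) * Real.exp (-(u + y/u))) := by
  have hexp : Real.exp (-(1*u)) * Real.exp (-(1*(y/u))) = Real.exp (-(u + y/u)) := by
    rw [← Real.exp_add]; ring_nf
  have hr : u ^ (a-1) / u ^ (b-1) * u⁻¹ = u ^ (a - b - 1) := by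
    rw [← Real.rpow_sub hu, ← Real.rpow_neg_one u, ← Real.rpow_add hu]
    congr 1; ring
  rw [Real.one_rpow, Real.one_rpow, Real.div_rpow hy.le hu.le]
  calc 1 / Real.Gamma a * u ^ (a-1) * Real.exp (-(1*u)) * u⁻¹ *
        (1 / Real.Gamma b * (y ^ (b-1) / u ^ (b-1)) * Real.exp (-(1*(y/u))))
      = (1 / (Real.Gamma a * Real.Gamma b) * y ^ (b-1)) *
        ((u ^ (a-1) / u ^ (b-1) * u⁻¹) * (Real.exp (-(1*u)) * Real.exp (-(1*(y/u))))) := by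
        ring
    _ = _ := by rw [hexp, hr]


lemma scale_measure (q : ℝ → ℝ≥0∞) (hq : Measurable q) (s : Set ℝ) (hs : MeasurableSet s)
    (u : ℝ) (hu : 0 < u) :
    volume.withDensity q ((fun v => u * v) ⁻¹' s)
      = ENNReal.ofReal u⁻¹ * ∫⁻ y, q (y / u) * s.indicator 1 y := by
  set G : ℝ → ℝ≥0∞ := fun y => q (y / u) * s.indicator 1 y with hG
  have hGm : Measurable G := (hq.comp (measurable_id.div_const u)).mul
    (measurable_const.indicator hs)
  have hps : MeasurableSet ((fun v => u * v) ⁻¹' s) := hs.preimage (measurable_const_mul u)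
  rw [withDensity_apply _ hps, ← lintegral_indicator hps]
  have hpt : ∀ v, ((fun v => u * v) ⁻¹' s).indicator q v = G (u * v) := by
    intro v
    simp only [hG, indicator, mem_preimage, mul_div_cancel_left₀ _ hu.ne', Pi.one_apply]
    by_cases h : u * v ∈ s
    · simp [h]
    · simp [h]
  simp_rw [hpt]
  have hmap : ∫⁻ a, G a ∂(Measure.map (fun v => u * v) volume) = ∫⁻ a, G (u * a) := by
    rw [lintegral_map hGm (measurable_const_mul u)]
  rw [← hmap, Real.map_volume_mul_left hu.ne', lintegral_smul_measure,
    abs_of_pos (inv_pos.mpr hu), smul_eq_mul]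

end Aux

open Set
open scoped ENNReal

/-- The product of independent `Gamma(N_R,1)` and `Gamma(N_T,1)` random variables has
density `f(x) = 2 x^((N_T+N_R)/2 - 1) K_τ(2√x) / (Γ(N_T)Γ(N_R))` for `x > 0`,
where `τ = |N_T - N_R|`. -/
theorem stmt_4 {Ω : Type*} [MeasurableSpace Ω] (μ : Measure Ω) [IsProbabilityMeasure μ]
    (NT NR : ℕ) (hNT : 0 < NT) (hNR : 0 < NR)
    (U V : Ω → ℝ) (hU : Measurable U) (hV : Measurable V)
    (hindep : IndepFun U V μ)
    (hUlaw : μ.map U = gammaMeasure NR 1) (hVlaw : μ.map V = gammaMeasure NT 1) :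
    μ.map (fun ω => U ω * V ω) =
      volume.withDensity (fun x => ENNReal.ofReal
        (if 0 < x then
          2 * x ^ (((NT : ℝ) + NR) / 2 - 1) * besselK |(NT : ℝ) - NR| (2 * Real.sqrt x) /
            (Real.Gamma NT * Real.Gamma NR)
        else 0)) := by
  have haR : (0:ℝ) < NR := Nat.cast_pos.mpr hNR
  have hbR : (0:ℝ) < NT := Nat.cast_pos.mpr hNT
  haveI hPa : IsProbabilityMeasure (gammaMeasure (NR:ℝ) 1) :=
    isProbabilityMeasure_gammaMeasure haR one_pos
  haveI hPb : IsProbabilityMeasure (gammaMeasure (NT:ℝ) 1) :=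
    isProbabilityMeasure_gammaMeasure hbR one_pos
  have hqm : Measurable (gammaPDF (NT:ℝ) 1) := (measurable_gammaPDFReal _ _).ennreal_ofReal
  have hpm : Measurable (gammaPDF (NR:ℝ) 1) := (measurable_gammaPDFReal _ _).ennreal_ofReal
  have hmul : Measurable fun p : ℝ × ℝ => p.1 * p.2 := measurable_fst.mul measurable_snd
  have hPair : μ.map (fun ω => (U ω, V ω)) = (gammaMeasure NR 1).prod (gammaMeasure NT 1) := by
    rw [← hUlaw, ← hVlaw]
    exact (indepFun_iff_map_prod_eq_prod_map_map hU.aemeasurable hV.aemeasurable).mp hindep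
  have hMap : μ.map (fun ω => U ω * V ω)
      = ((gammaMeasure (NR:ℝ) 1).prod (gammaMeasure (NT:ℝ) 1)).map (fun p : ℝ × ℝ => p.1 * p.2) := by
    rw [← hPair, Measure.map_map hmul (hU.prodMk hV)]
    rfl
  rw [hMap]
  refine Measure.ext fun s hs => ?_
  rw [Measure.map_apply hmul hs, Measure.prod_apply (hmul hs)]
  have hFmeas : Measurable fun u : ℝ =>
      gammaMeasure (NT:ℝ) 1 (Prod.mk u ⁻¹' ((fun p : ℝ × ℝ => p.1 * p.2) ⁻¹' s)) :=
    measurable_measure_prodMk_left (hmul hs)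
  rw [show gammaMeasure (NR:ℝ) 1 = volume.withDensity (gammaPDF (NR:ℝ) 1) from rfl,
    lintegral_withDensity_eq_lintegral_mul volume hpm hFmeas]
  -- step 1: a.e. rewrite to indicator over Ioi 0 with scaled inner integral
  have step1 : ∫⁻ u, (gammaPDF (NR:ℝ) 1 * fun u =>
        gammaMeasure (NT:ℝ) 1 (Prod.mk u ⁻¹' ((fun p : ℝ × ℝ => p.1 * p.2) ⁻¹' s))) u
      = ∫⁻ u in Ioi (0:ℝ), ∫⁻ y, (gammaPDF (NR:ℝ) 1 u * ENNReal.ofReal u⁻¹) *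
          (gammaPDF (NT:ℝ) 1 (y / u) * s.indicator 1 y) := by
    rw [← lintegral_indicator measurableSet_Ioi]
    refine lintegral_congr_ae ?_
    have h0 : ({(0:ℝ)} : Set ℝ)ᶜ ∈ ae volume := compl_mem_ae_iff.mpr Real.volume_singleton
    filter_upwards [h0] with u hu0
    simp only [Pi.mul_apply]
    rcases lt_trichotomy u 0 with h | h | h
    · rw [gammaPDF_of_neg h, zero_mul, indicator_of_notMem (by simpa using h.not_gt)]
    · exact absurd h (by simpa using hu0)
    · rw [indicator_of_mem (mem_Ioi.mpr h)]
      have hset : Prod.mk u ⁻¹' ((fun p : ℝ × ℝ => p.1 * p.2) ⁻¹' s) = (fun v => u * v) ⁻¹' s := rfl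
      rw [show gammaMeasure (NT:ℝ) 1 = volume.withDensity (gammaPDF (NT:ℝ) 1) from rfl, hset,
        scale_measure _ hqm s hs u h]
      rw [lintegral_const_mul' (gammaPDF (NR:ℝ) 1 u * ENNReal.ofReal u⁻¹) _
        (ENNReal.mul_ne_top (by exact ENNReal.ofReal_ne_top) ENNReal.ofReal_ne_top),
        ← mul_assoc]
  rw [step1]
  -- step 2: swap integrals
  have hFm : Measurable (Function.uncurry fun (u y : ℝ) =>
      (gammaPDF (NR:ℝ) 1 u * ENNReal.ofReal u⁻¹) *
        (gammaPDF (NT:ℝ) 1 (y / u) * s.indicator 1 y)) := by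
    apply Measurable.mul
    · exact ((hpm.comp measurable_fst).mul
        ((measurable_fst.inv).ennreal_ofReal))
    · exact ((hqm.comp (measurable_snd.div measurable_fst)).mul
        ((measurable_const.indicator hs).comp measurable_snd))
  rw [lintegral_lintegral_swap hFm.aemeasurable]
  -- step 3: pull indicator out of inner integral
  have step3 : ∀ y : ℝ, ∫⁻ u in Ioi (0:ℝ), (gammaPDF (NR:ℝ) 1 u * ENNReal.ofReal u⁻¹) *
        (gammaPDF (NT:ℝ) 1 (y / u) * s.indicator 1 y)
      = (∫⁻ u in Ioi (0:ℝ), gammaPDF (NR:ℝ) 1 u * ENNReal.ofReal u⁻¹ *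
          gammaPDF (NT:ℝ) 1 (y / u)) * s.indicator 1 y := by
    intro y
    rw [← lintegral_mul_const' _ _ (by
      by_cases h : y ∈ s
      · simp [indicator_of_mem h]
      · simp [indicator_of_notMem h])]
    exact lintegral_congr fun u => by ring
  simp_rw [step3]
  -- RHS
  rw [withDensity_apply _ hs, ← lintegral_indicator hs]
  refine lintegral_congr_ae ?_
  have h0 : ({(0:ℝ)} : Set ℝ)ᶜ ∈ ae volume := compl_mem_ae_iff.mpr Real.volume_singleton
  filter_upwards [h0] with y hy0
  have hind : s.indicator (fun x => ENNReal.ofReal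
      (if 0 < x then 2 * x ^ (((NT : ℝ) + NR) / 2 - 1) *
        besselK |(NT : ℝ) - NR| (2 * Real.sqrt x) / (Real.Gamma NT * Real.Gamma NR) else 0)) y
      = ENNReal.ofReal (if 0 < y then 2 * y ^ (((NT : ℝ) + NR) / 2 - 1) *
          besselK |(NT : ℝ) - NR| (2 * Real.sqrt y) / (Real.Gamma NT * Real.Gamma NR) else 0) *
        s.indicator 1 y := by
    by_cases h : y ∈ s
    · simp [indicator_of_mem h]
    · simp [indicator_of_notMem h]
  rw [hind]
  congr 1
  -- core density identity
  rcases lt_trichotomy y 0 with h | h | h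
  · rw [if_neg (by linarith), ENNReal.ofReal_zero]
    rw [show (0:ℝ≥0∞) = ∫⁻ u in Ioi (0:ℝ), 0 from (lintegral_zero).symm]
    refine setLIntegral_congr_fun measurableSet_Ioi (fun u hu => ?_)
    have hu0 : (0:ℝ) < u := hu
    rw [gammaPDF_of_neg (show y / u < 0 from div_neg_of_neg_of_pos h hu0), mul_zero]
  · exact absurd h (by simpa using hy0)
  · rw [if_pos h]
    set a : ℝ := (NR:ℝ)
    set b : ℝ := (NT:ℝ)
    have hΓa : 0 < Real.Gamma a := Real.Gamma_pos_of_pos haR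
    have hΓb : 0 < Real.Gamma b := Real.Gamma_pos_of_pos hbR
    have key : ∫⁻ u in Ioi (0:ℝ), gammaPDF (NR:ℝ) 1 u * ENNReal.ofReal u⁻¹ *
          gammaPDF (NT:ℝ) 1 (y / u)
        = ENNReal.ofReal (1 / (Real.Gamma a * Real.Gamma b) * y ^ (b-1)) *
          ∫⁻ u in Ioi (0:ℝ), ENNReal.ofReal (u ^ (a - b - 1) * Real.exp (-(u + y/u))) := by
      rw [← lintegral_const_mul' _ _ ENNReal.ofReal_ne_top]
      refine setLIntegral_congr_fun measurableSet_Ioi (fun u hu => ?_)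
      have hu0 : (0:ℝ) < u := hu
      rw [gammaPDF_of_nonneg hu0.le, gammaPDF_of_nonneg (div_nonneg h.le hu0.le)]
      rw [← ENNReal.ofReal_mul (by positivity), ← ENNReal.ofReal_mul (by
        have := hΓa.le
        positivity)]
      rw [← ENNReal.ofReal_mul (by positivity)]
      exact congrArg ENNReal.ofReal (real_algebra a b u y hu0 h)
    rw [key, show a - b - 1 = (a - b) - 1 by ring, core_lintegral (a - b) y h,
      ← ENNReal.ofReal_mul (by
        have := hΓa.le
        positivity)]
    congr 1
    have habs : |(NT : ℝ) - NR| = |a - b| := by rw [abs_sub_comm]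
    rw [habs, besselK_abs]
    have hyadd : y ^ (b - 1) * y ^ ((a - b) / 2) = y ^ ((b + a) / 2 - 1) := by
      rw [← Real.rpow_add h]; congr 1; ring
    rw [← hyadd]
    ring
end

section
/- For positive integers N_T ≠ N_R with τ = |N_T − N_R|, as ε → 0⁺, ∫₀^ε 2 x^{(N_T+N_R)/2 − 1} K_τ(2√x) dx / (Γ(N_T)Γ(N_R)) ~ Γ(τ) ε^{min(N_T,N_R)} / (Γ(N_T)Γ(N_R) min(N_T,N_R)). -/
open MeasureTheory Real Set Filter

lemma image_exp_map (y : ℝ) (hy : 0 < y) :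
    (fun t => y / 2 * Real.exp t) '' (Ioi 0) = Ioi (y / 2) := by
  ext u
  simp only [mem_image, mem_Ioi]
  constructor
  · rintro ⟨t, ht, rfl⟩
    have h1 : 1 < Real.exp t := by simpa using Real.exp_lt_exp.2 ht
    nlinarith
  · intro hu
    have hu0 : 0 < u := lt_trans (by positivity) hu
    refine ⟨Real.log (2 * u / y), ?_, ?_⟩
    · apply Real.log_pos
      rw [lt_div_iff₀ hy]
      linarith
    · rw [Real.exp_log (by positivity)]
      field_simp

lemma hasDeriv_exp_map (y : ℝ) (t : ℝ) :
    HasDerivWithinAt (fun t => y / 2 * Real.exp t) (y / 2 * Real.exp t) (Ioi 0) t :=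
  ((Real.hasDerivAt_exp t).const_mul (y / 2)).hasDerivWithinAt

lemma inj_exp_map (y : ℝ) (hy : 0 < y) : InjOn (fun t => y / 2 * Real.exp t) (Ioi 0) := by
  intro a _ b _ h
  simp only at h
  have := mul_left_cancel₀ (by positivity : (y/2 : ℝ) ≠ 0) h
  exact Real.exp_injective this

lemma subst_eval (τ y t : ℝ) (hy : 0 < y) :
    |y / 2 * Real.exp t| • (Real.exp (-(y / 2 * Real.exp t) - y^2/(4*(y / 2 * Real.exp t)))
      * (y / 2 * Real.exp t) ^ (τ - 1)) =
    (y/2) ^ τ * (Real.exp (-y * Real.cosh t) * Real.exp (τ * t)) := by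
  have he := Real.exp_pos t
  have h2 : (0:ℝ) < y / 2 * Real.exp t := by positivity
  rw [smul_eq_mul, abs_of_pos h2]
  have harg : -(y / 2 * Real.exp t) - y^2/(4*(y / 2 * Real.exp t)) = -y * Real.cosh t := by
    rw [Real.cosh_eq]
    rw [Real.exp_neg]
    field_simp
    ring
  rw [harg]
  have key : (y / 2 * Real.exp t) ^ (τ - 1) * (y / 2 * Real.exp t) = (y/2) ^ τ * Real.exp (τ * t) := by
    have h1 : (y / 2 * Real.exp t) ^ (τ - 1) * (y / 2 * Real.exp t)
        = (y / 2 * Real.exp t) ^ τ := by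
      nth_rewrite 2 [← Real.rpow_one (y / 2 * Real.exp t)]
      rw [← Real.rpow_add h2]; ring_nf
    rw [h1, Real.mul_rpow (by positivity) he.le, ← Real.exp_mul, mul_comm t τ]
  rw [mul_comm (y / 2 * Real.exp t), mul_assoc, key]
  ring

lemma g_integrable (τ y : ℝ) (hτ : 0 < τ) (hy : 0 < y) :
    IntegrableOn (fun u => Real.exp (-u - y^2/(4*u)) * u ^ (τ-1)) (Ioi (y/2)) := by
  have hb : IntegrableOn (fun u : ℝ => Real.exp (-u) * u ^ (τ-1)) (Ioi (y/2)) :=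
    (Real.GammaIntegral_convergent hτ).mono_set
      (Ioi_subset_Ioi (by positivity))
  refine hb.mono' ?_ ?_
  · refine ContinuousOn.aestronglyMeasurable ?_ measurableSet_Ioi
    intro u hu
    have hu0 : u ≠ 0 := (lt_trans (by positivity) hu).ne'
    apply ContinuousWithinAt.mul
    · exact (Real.continuous_exp.continuousAt.comp
        (continuousAt_id.neg.sub (continuousAt_const.div
          (continuousAt_const.mul continuousAt_id)
          (mul_ne_zero four_ne_zero hu0)))).continuousWithinAt
    · exact (Real.continuousAt_rpow_const u (τ-1) (Or.inl hu0)).continuousWithinAt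
  · filter_upwards [ae_restrict_mem measurableSet_Ioi] with u hu
    have hu0 : 0 < u := lt_trans (by positivity) hu
    rw [Real.norm_eq_abs, abs_of_nonneg (by positivity)]
    apply mul_le_mul_of_nonneg_right _ (by positivity)
    apply Real.exp_le_exp.2
    have : 0 ≤ y^2/(4*u) := by positivity
    linarith

lemma key_subst (τ y : ℝ) (hy : 0 < y) :
    ∫ u in Ioi (y/2), Real.exp (-u - y^2/(4*u)) * u ^ (τ-1) =
    (y/2) ^ τ * ∫ t in Ioi 0, Real.exp (-y * Real.cosh t) * Real.exp (τ * t) := by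
  rw [← image_exp_map y hy,
    integral_image_eq_integral_abs_deriv_smul measurableSet_Ioi
      (fun t _ => hasDeriv_exp_map y t) (inj_exp_map y hy)]
  simp_rw [subst_eval τ y _ hy]
  rw [integral_const_mul]

lemma I1_integrable (τ y : ℝ) (hτ : 0 < τ) (hy : 0 < y) :
    IntegrableOn (fun t => Real.exp (-y * Real.cosh t) * Real.exp (τ * t)) (Ioi 0) := by
  have h0 := (integrableOn_image_iff_integrableOn_abs_deriv_smul measurableSet_Ioi
      (fun t (_ : t ∈ Ioi (0:ℝ)) => hasDeriv_exp_map y t) (inj_exp_map y hy)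
      (fun u => Real.exp (-u - y^2/(4*u)) * u ^ (τ-1))).1
  rw [image_exp_map y hy] at h0
  have h2 := h0 (g_integrable τ y hτ hy)
  simp_rw [subst_eval τ y _ hy] at h2
  have h3 := h2.const_mul (((y/2:ℝ))^τ)⁻¹
  have hne : ((y/2:ℝ))^τ ≠ 0 := by positivity
  simpa [IntegrableOn, ← mul_assoc, inv_mul_cancel₀ hne] using h3

lemma I2_integrable (τ y : ℝ) (hτ : 0 < τ) (hy : 0 ≤ y) :
    IntegrableOn (fun t => Real.exp (-y * Real.cosh t) * Real.exp (-(τ * t))) (Ioi 0) := by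
  have hb : IntegrableOn (fun t : ℝ => Real.exp (-(τ * t))) (Ioi 0) := by
    simpa [neg_mul, mul_comm] using exp_neg_integrableOn_Ioi 0 hτ
  refine hb.mono' ?_ ?_
  · exact ((Real.continuous_exp.comp (continuous_const.mul Real.continuous_cosh)).mul
      (Real.continuous_exp.comp (continuous_const.mul continuous_id).neg)).aestronglyMeasurable
  · filter_upwards with t
    rw [Real.norm_eq_abs, abs_of_nonneg (by positivity)]
    have h1 : Real.exp (-y * Real.cosh t) ≤ 1 := by
      rw [Real.exp_le_one_iff]
      have := Real.cosh_pos t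
      nlinarith
    nlinarith [Real.exp_pos (-(τ * t)), h1, Real.exp_nonneg (-y * Real.cosh t)]

lemma I2_bound (τ y : ℝ) (hτ : 0 < τ) (hy : 0 ≤ y) :
    ∫ t in Ioi (0:ℝ), Real.exp (-y * Real.cosh t) * Real.exp (-(τ * t)) ≤ 1 / τ := by
  have hb : IntegrableOn (fun t : ℝ => Real.exp (-(τ * t))) (Ioi 0) := by
    simpa [neg_mul, mul_comm] using exp_neg_integrableOn_Ioi 0 hτ
  have h1 : ∫ t in Ioi (0:ℝ), Real.exp (-y * Real.cosh t) * Real.exp (-(τ * t))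
      ≤ ∫ t in Ioi (0:ℝ), Real.exp (-(τ * t)) := by
    apply setIntegral_mono_on (I2_integrable τ y hτ hy) hb measurableSet_Ioi
    intro t _
    have h1 : Real.exp (-y * Real.cosh t) ≤ 1 := by
      rw [Real.exp_le_one_iff]
      have := Real.cosh_pos t
      nlinarith
    nlinarith [Real.exp_pos (-(τ * t)), Real.exp_nonneg (-y * Real.cosh t)]
  have h2 : ∫ t in Ioi (0:ℝ), Real.exp (-(τ * t)) = 1 / τ := by
    have := MeasureTheory.integral_comp_mul_left_Ioi (fun u => Real.exp (-u)) 0 hτ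
    simp only [mul_zero, integral_exp_neg_Ioi, neg_zero, Real.exp_zero, smul_eq_mul,
      mul_one] at this
    rw [this, one_div]
  linarith

lemma besselK_split (τ y : ℝ) (hτ : 0 < τ) (hy : 0 < y) :
    besselK τ y = ((∫ t in Ioi (0:ℝ), Real.exp (-y * Real.cosh t) * Real.exp (τ * t)) +
      ∫ t in Ioi (0:ℝ), Real.exp (-y * Real.cosh t) * Real.exp (-(τ * t))) / 2 := by
  rw [besselK]
  have h : ∀ t : ℝ, Real.exp (-y * Real.cosh t) * Real.cosh (τ * t)
      = (Real.exp (-y * Real.cosh t) * Real.exp (τ * t)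
        + Real.exp (-y * Real.cosh t) * Real.exp (-(τ * t))) / 2 := by
    intro t; rw [Real.cosh_eq (τ * t)]; ring
  simp_rw [h]
  rw [integral_div, integral_add (I1_integrable τ y hτ hy) (I2_integrable τ y hτ hy.le)]

lemma g_aesm (τ y : ℝ) :
    AEStronglyMeasurable (fun u => Real.exp (-u - y^2/(4*u)) * u ^ (τ-1))
      (volume.restrict (Ioi (0:ℝ))) := by
  refine ContinuousOn.aestronglyMeasurable ?_ measurableSet_Ioi
  intro u hu
  have hu0 : u ≠ 0 := (mem_Ioi.1 hu).ne'
  apply ContinuousWithinAt.mul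
  · exact (Real.continuous_exp.continuousAt.comp
      (continuousAt_id.neg.sub (continuousAt_const.div
        (continuousAt_const.mul continuousAt_id)
        (mul_ne_zero four_ne_zero hu0)))).continuousWithinAt
  · exact (Real.continuousAt_rpow_const u (τ-1) (Or.inl hu0)).continuousWithinAt

lemma tendsto_J (τ : ℝ) (hτ : 0 < τ) :
    Tendsto (fun y => ∫ u in Ioi (y/2), Real.exp (-u - y^2/(4*u)) * u ^ (τ-1))
      (nhdsWithin 0 (Ioi 0)) (nhds (Real.Gamma τ)) := by
  have hG : Real.Gamma τ = ∫ u in Ioi (0:ℝ), Real.exp (-u) * u ^ (τ-1) :=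
    Real.Gamma_eq_integral hτ
  rw [hG]
  have heq : ∀ᶠ y in nhdsWithin (0:ℝ) (Ioi 0),
      (∫ u in Ioi (0:ℝ), indicator (Ioi (y/2))
        (fun u => Real.exp (-u - y^2/(4*u)) * u ^ (τ-1)) u)
      = ∫ u in Ioi (y/2), Real.exp (-u - y^2/(4*u)) * u ^ (τ-1) := by
    filter_upwards [self_mem_nhdsWithin] with y (hy : 0 < y)
    rw [integral_indicator measurableSet_Ioi, Measure.restrict_restrict measurableSet_Ioi,
      Ioi_inter_Ioi, max_eq_left (by positivity)]
  refine Tendsto.congr' heq ?_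
  apply tendsto_integral_filter_of_dominated_convergence
    (fun u => Real.exp (-u) * u ^ (τ-1))
  · filter_upwards with y
    exact (g_aesm τ y).indicator measurableSet_Ioi
  · filter_upwards [self_mem_nhdsWithin] with y (hy : 0 < y)
    filter_upwards [ae_restrict_mem measurableSet_Ioi] with u (hu : 0 < u)
    rw [Real.norm_eq_abs]
    by_cases h : u ∈ Ioi (y/2)
    · rw [indicator_of_mem h, abs_of_nonneg (by positivity)]
      apply mul_le_mul_of_nonneg_right _ (by positivity)
      apply Real.exp_le_exp.2
      have : 0 ≤ y^2/(4*u) := by positivity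
      linarith
    · rw [indicator_of_notMem h, abs_zero]
      positivity
  · exact Real.GammaIntegral_convergent hτ
  · filter_upwards [ae_restrict_mem measurableSet_Ioi] with u (hu : 0 < u)
    have hmem : Ioo (0:ℝ) (2*u) ∈ nhdsWithin (0:ℝ) (Ioi 0) :=
      Ioo_mem_nhdsGT_of_mem ⟨le_refl 0, by positivity⟩
    have heq2 : ∀ᶠ y in nhdsWithin (0:ℝ) (Ioi 0),
        Real.exp (-u - y^2/(4*u)) * u ^ (τ-1)
        = indicator (Ioi (y/2)) (fun v => Real.exp (-v - y^2/(4*v)) * v ^ (τ-1)) u := by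
      filter_upwards [hmem] with y hy
      rw [mem_Ioo] at hy
      have hmem2 : u ∈ Ioi (y/2) := mem_Ioi.2 (by linarith [hy.2])
      rw [indicator_of_mem hmem2]
    refine Tendsto.congr' heq2 ?_
    have hcont : ContinuousAt (fun y : ℝ => Real.exp (-u - y^2/(4*u)) * u ^ (τ-1)) 0 := by
      exact ((Real.continuous_exp.comp (continuous_const.sub
        ((continuous_pow 2).div_const _))).mul continuous_const).continuousAt
    have := hcont.tendsto
    simp only [ne_eq, OfNat.ofNat_ne_zero, not_false_eq_true, zero_pow, zero_div, sub_zero]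
      at this
    exact tendsto_nhdsWithin_of_tendsto_nhds this

lemma I2_nonneg (τ y : ℝ) :
    0 ≤ ∫ t in Ioi (0:ℝ), Real.exp (-y * Real.cosh t) * Real.exp (-(τ * t)) :=
  setIntegral_nonneg measurableSet_Ioi (fun t _ => by positivity)

lemma tendsto_rpow_mul_besselK (τ : ℝ) (hτ : 0 < τ) :
    Tendsto (fun y => y ^ τ * besselK τ y) (nhdsWithin 0 (Ioi 0))
      (nhds (2 ^ (τ - 1) * Real.Gamma τ)) := by
  have hev : ∀ᶠ y in nhdsWithin (0:ℝ) (Ioi 0),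
      (2:ℝ) ^ (τ-1) * (∫ u in Ioi (y/2), Real.exp (-u - y^2/(4*u)) * u ^ (τ-1))
        + y ^ τ / 2 * ∫ t in Ioi (0:ℝ), Real.exp (-y * Real.cosh t) * Real.exp (-(τ * t))
      = y ^ τ * besselK τ y := by
    filter_upwards [self_mem_nhdsWithin] with y (hy : 0 < y)
    rw [besselK_split τ y hτ hy, key_subst τ y hy]
    have hpow : (2:ℝ) ^ (τ-1) * (y/2) ^ τ = y ^ τ / 2 := by
      rw [Real.div_rpow hy.le (by norm_num : (0:ℝ) ≤ 2),
        Real.rpow_sub (by norm_num : (0:ℝ) < 2), Real.rpow_one]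
      have h2 : (2:ℝ) ^ τ ≠ 0 := by positivity
      field_simp
    rw [← mul_assoc, hpow]
    ring
  refine Tendsto.congr' hev ?_
  have h1 : Tendsto (fun y : ℝ => (2:ℝ) ^ (τ-1) *
      ∫ u in Ioi (y/2), Real.exp (-u - y^2/(4*u)) * u ^ (τ-1))
      (nhdsWithin 0 (Ioi 0)) (nhds ((2:ℝ) ^ (τ-1) * Real.Gamma τ)) :=
    (tendsto_J τ hτ).const_mul _
  have h2 : Tendsto (fun y : ℝ => y ^ τ / 2 *
      ∫ t in Ioi (0:ℝ), Real.exp (-y * Real.cosh t) * Real.exp (-(τ * t)))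
      (nhdsWithin 0 (Ioi 0)) (nhds 0) := by
    have hrp : Tendsto (fun y : ℝ => y ^ τ / (2 * τ)) (nhdsWithin 0 (Ioi 0)) (nhds 0) := by
      have hc : Tendsto (fun y : ℝ => y ^ τ) (nhds 0) (nhds 0) := by
        have := (Real.continuousAt_rpow_const 0 τ (Or.inr hτ.le)).tendsto
        rwa [Real.zero_rpow hτ.ne'] at this
      have h3 : Tendsto (fun y : ℝ => y ^ τ) (nhdsWithin 0 (Ioi 0)) (nhds 0) :=
        tendsto_nhdsWithin_of_tendsto_nhds hc
      simpa using h3.div_const (2 * τ)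
    apply squeeze_zero'
    · filter_upwards [self_mem_nhdsWithin] with y (hy : 0 < y)
      have := I2_nonneg τ y
      positivity
    · filter_upwards [self_mem_nhdsWithin] with y (hy : 0 < y)
      have hb := I2_bound τ y hτ hy.le
      have hyp : (0:ℝ) < y ^ τ := Real.rpow_pos_of_pos hy τ
      calc y ^ τ / 2 * ∫ t in Ioi (0:ℝ), Real.exp (-y * Real.cosh t) * Real.exp (-(τ * t))
          ≤ y ^ τ / 2 * (1 / τ) := by
            apply mul_le_mul_of_nonneg_left hb (by positivity)
        _ = y ^ τ / (2 * τ) := by field_simp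
    · exact hrp
  have := h1.add h2
  simpa using this

lemma ratio_integral (f : ℝ → ℝ) (m : ℕ) (hm : 1 ≤ m) (L : ℝ) (hL : 0 < L)
    (hmeas : AEStronglyMeasurable f (volume.restrict (Ioi 0)))
    (hlim : Tendsto (fun x => f x / x ^ (m - 1)) (nhdsWithin 0 (Ioi 0)) (nhds L)) :
    Tendsto (fun ε => (∫ x in Ioc (0:ℝ) ε, f x) / (L * ε ^ m / m))
      (nhdsWithin 0 (Ioi 0)) (nhds 1) := by
  rw [Metric.tendsto_nhds]
  intro δ hδ
  set δ' : ℝ := L * δ / 2 with hδ'def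
  have hδ' : 0 < δ' := by positivity
  rw [Metric.tendsto_nhdsWithin_nhds] at hlim
  obtain ⟨η, hη, hηprop⟩ := hlim δ' hδ'
  filter_upwards [Ioo_mem_nhdsGT_of_mem (Set.mem_Ico.2 ⟨le_refl (0:ℝ), hη⟩)] with ε hε
  obtain ⟨hε0, hεη⟩ := hε
  -- pointwise bounds on Ioc 0 ε
  have hpt : ∀ x ∈ Ioc (0:ℝ) ε,
      (L - δ') * x ^ (m - 1) ≤ f x ∧ f x ≤ (L + δ') * x ^ (m - 1) := by
    intro x hx
    obtain ⟨hx0, hxε⟩ := hx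
    have hxpow : (0:ℝ) < x ^ (m - 1) := by positivity
    have hd := hηprop (mem_Ioi.2 hx0)
      (by rw [Real.dist_eq, sub_zero, abs_of_pos hx0]; linarith)
    rw [Real.dist_eq, abs_lt] at hd
    constructor
    · have : L - δ' ≤ f x / x ^ (m - 1) := by linarith
      calc (L - δ') * x ^ (m-1) ≤ (f x / x ^ (m-1)) * x ^ (m-1) :=
            mul_le_mul_of_nonneg_right this hxpow.le
        _ = f x := div_mul_cancel₀ _ hxpow.ne'
    · have : f x / x ^ (m - 1) ≤ L + δ' := by linarith
      calc f x = (f x / x ^ (m-1)) * x ^ (m-1) := (div_mul_cancel₀ _ hxpow.ne').symm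
        _ ≤ (L + δ') * x ^ (m-1) := mul_le_mul_of_nonneg_right this hxpow.le
  have hpoly : IntegrableOn (fun x : ℝ => x ^ (m - 1)) (Ioc 0 ε) :=
    (continuous_pow (m-1)).integrableOn_Ioc
  have hfint : IntegrableOn f (Ioc 0 ε) := by
    refine ((hpoly.const_mul (|L| + δ')).mono' ?_ ?_)
    · exact hmeas.mono_set Ioc_subset_Ioi_self
    · filter_upwards [ae_restrict_mem measurableSet_Ioc] with x hx
      have h2 := (hpt x hx).1
      have h3 := (hpt x hx).2
      have hx0 : 0 < x := hx.1
      have hxpow : (0:ℝ) < x ^ (m - 1) := by positivity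
      rw [Real.norm_eq_abs, abs_le]
      have hLa : L ≤ |L| := le_abs_self L
      have hLb : -|L| ≤ L := neg_abs_le L
      constructor
      · have : (-(|L| + δ')) * x ^ (m-1) ≤ (L - δ') * x ^ (m-1) := by nlinarith
        calc (-((|L| + δ') * x ^ (m-1))) = (-(|L| + δ')) * x ^ (m-1) := by ring
          _ ≤ (L - δ') * x ^ (m-1) := this
          _ ≤ f x := h2
      · have : (L + δ') * x ^ (m-1) ≤ (|L| + δ') * x ^ (m-1) := by nlinarith
        linarith
  have hintpoly : ∫ x in Ioc (0:ℝ) ε, x ^ (m - 1) = ε ^ m / m := by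
    have h1 : ∫ x in (0:ℝ)..ε, x ^ (m-1) = ε ^ m / m := by
      rw [integral_pow, Nat.sub_add_cancel hm]
      have hc : ((m-1:ℕ):ℝ) + 1 = (m:ℝ) := by
        have h := Nat.sub_add_cancel hm
        exact_mod_cast congrArg (Nat.cast (R := ℝ)) h
      rw [hc]
      simp [zero_pow (by omega : m ≠ 0)]
    rw [← h1, intervalIntegral.integral_of_le hε0.le]
  have hub : (∫ x in Ioc (0:ℝ) ε, f x) ≤ (L + δ') * (ε ^ m / m) := by
    have := setIntegral_mono_on hfint (hpoly.const_mul (L + δ')) measurableSet_Ioc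
      (fun x hx => (hpt x hx).2)
    rwa [integral_const_mul, hintpoly] at this
  have hlb : (L - δ') * (ε ^ m / m) ≤ ∫ x in Ioc (0:ℝ) ε, f x := by
    have := setIntegral_mono_on (hpoly.const_mul (L - δ')) hfint measurableSet_Ioc
      (fun x hx => (hpt x hx).1)
    rwa [integral_const_mul, hintpoly] at this
  have hm0 : (0:ℝ) < m := by exact_mod_cast hm
  have hD : (0:ℝ) < L * ε ^ m / m := by positivity
  rw [Real.dist_eq]
  have key : (∫ x in Ioc (0:ℝ) ε, f x) / (L * ε ^ m / m) - 1
      = ((∫ x in Ioc (0:ℝ) ε, f x) - L * ε ^ m / m) / (L * ε ^ m / m) := by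
    field_simp
  rw [key, abs_div, abs_of_pos hD, div_lt_iff₀ hD]
  rw [abs_lt]
  constructor
  · have : L * ε ^ m / m - δ' * (ε ^ m / m) ≤ ∫ x in Ioc (0:ℝ) ε, f x := by
      calc L * ε ^ m / m - δ' * (ε ^ m / m) = (L - δ') * (ε ^ m / m) := by ring
        _ ≤ _ := hlb
    have hδeps : δ' * (ε ^ m / m) < δ * (L * ε ^ m / m) := by
      rw [hδ'def]
      have h1 : (0:ℝ) < ε ^ m / m := by positivity
      calc L * δ / 2 * (ε ^ m / m) = (δ / 2) * (L * (ε ^ m / m)) := by ring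
        _ < δ * (L * (ε ^ m / m)) := by
            apply mul_lt_mul_of_pos_right (by linarith) (by positivity)
        _ = δ * (L * ε ^ m / m) := by ring
    linarith
  · have : (∫ x in Ioc (0:ℝ) ε, f x) ≤ L * ε ^ m / m + δ' * (ε ^ m / m) := by
      calc (∫ x in Ioc (0:ℝ) ε, f x) ≤ (L + δ') * (ε ^ m / m) := hub
        _ = L * ε ^ m / m + δ' * (ε ^ m / m) := by ring
    have hδeps : δ' * (ε ^ m / m) < δ * (L * ε ^ m / m) := by
      rw [hδ'def]
      have h1 : (0:ℝ) < ε ^ m / m := by positivity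
      calc L * δ / 2 * (ε ^ m / m) = (δ / 2) * (L * (ε ^ m / m)) := by ring
        _ < δ * (L * (ε ^ m / m)) := by
            apply mul_lt_mul_of_pos_right (by linarith) (by positivity)
        _ = δ * (L * ε ^ m / m) := by ring
    linarith

theorem stmt_7 (NT NR : ℕ) (hNT : 0 < NT) (hNR : 0 < NR) (hne : NT ≠ NR) :
    Filter.Tendsto
      (fun ε : ℝ =>
        (∫ x in Set.Ioc (0 : ℝ) ε,
            2 * x ^ (((NT : ℝ) + NR) / 2 - 1) * besselK |(NT : ℝ) - NR| (2 * Real.sqrt x) /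
              (Real.Gamma NT * Real.Gamma NR)) /
          (Real.Gamma |(NT : ℝ) - NR| * ε ^ (min NT NR : ℕ) /
            (Real.Gamma NT * Real.Gamma NR * (min NT NR : ℕ))))
      (nhdsWithin 0 (Set.Ioi 0)) (nhds 1) := by
  set τr : ℝ := |(NT : ℝ) - NR| with hτrdef
  set m : ℕ := min NT NR with hmdef
  set s : ℝ := ((NT : ℝ) + NR) / 2 with hsdef
  set f : ℝ → ℝ := fun x => 2 * x ^ (s - 1) * besselK τr (2 * Real.sqrt x) with hfdef
  have hm1 : 1 ≤ m := le_min hNT hNR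
  have hτ1 : (1:ℝ) ≤ τr := by
    rcases Nat.lt_or_ge NT NR with h | h
    · rw [hτrdef, abs_of_neg (sub_neg.2 (by exact_mod_cast h))]
      have : (NT:ℝ) + 1 ≤ NR := by exact_mod_cast h
      linarith
    · have h' : NR < NT := lt_of_le_of_ne h (Ne.symm hne)
      rw [hτrdef, abs_of_pos (sub_pos.2 (by exact_mod_cast h'))]
      have : (NR:ℝ) + 1 ≤ NT := by exact_mod_cast h'
      linarith
  have hτ0 : (0:ℝ) < τr := lt_of_lt_of_le zero_lt_one hτ1
  have hhalf : s - 1 - ((m:ℝ) - 1) = τr / 2 := by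
    rcases Nat.lt_or_ge NT NR with h | h
    · have hmin : m = NT := min_eq_left h.le
      have habs : τr = (NR:ℝ) - NT := by
        rw [hτrdef, abs_of_neg (sub_neg.2 (by exact_mod_cast h))]; ring
      rw [hsdef, hmin, habs]; push_cast; ring
    · have h' : NR < NT := lt_of_le_of_ne h (Ne.symm hne)
      have hmin : m = NR := min_eq_right h'.le
      have habs : τr = (NT:ℝ) - NR := by
        rw [hτrdef, abs_of_pos (sub_pos.2 (by exact_mod_cast h'))]
      rw [hsdef, hmin, habs]; push_cast; ring
  have hmcast : ((m - 1 : ℕ) : ℝ) = (m:ℝ) - 1 := by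
    have h := Nat.sub_add_cancel hm1
    have : ((m-1:ℕ):ℝ) + 1 = (m:ℝ) := by exact_mod_cast congrArg (Nat.cast (R := ℝ)) h
    linarith
  -- measurability
  have hKm : StronglyMeasurable (besselK τr) := by
    have hc : Continuous (fun p : ℝ × ℝ =>
        Real.exp (-p.1 * Real.cosh p.2) * Real.cosh (τr * p.2)) := by
      exact (Real.continuous_exp.comp ((continuous_fst.neg).mul
        (Real.continuous_cosh.comp continuous_snd))).mul
        (Real.continuous_cosh.comp (continuous_const.mul continuous_snd))
    exact hc.stronglyMeasurable.integral_prod_right'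
  have hmeas : AEStronglyMeasurable f (volume.restrict (Ioi 0)) := by
    apply AEStronglyMeasurable.mul
    · refine ContinuousOn.aestronglyMeasurable ?_ measurableSet_Ioi
      exact continuousOn_const.mul (fun x hx =>
        (Real.continuousAt_rpow_const x _ (Or.inl (mem_Ioi.1 hx).ne')).continuousWithinAt)
    · exact (hKm.measurable.comp
        ((continuous_const.mul Real.continuous_sqrt).measurable)).aestronglyMeasurable
  -- the limit of f x / x^(m-1)
  have hmap : Tendsto (fun x : ℝ => 2 * Real.sqrt x) (nhdsWithin 0 (Ioi 0))
      (nhdsWithin 0 (Ioi 0)) := by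
    apply tendsto_nhdsWithin_of_tendsto_nhds_of_eventually_within
    · have hc : Tendsto (fun x : ℝ => 2 * Real.sqrt x) (nhds 0) (nhds 0) := by
        have h2 := ((continuous_const (y := (2:ℝ))).mul Real.continuous_sqrt).tendsto (0:ℝ)
        simpa [Pi.mul_def] using h2
      exact hc.mono_left nhdsWithin_le_nhds
    · filter_upwards [self_mem_nhdsWithin] with x (hx : 0 < x)
      have : 0 < Real.sqrt x := Real.sqrt_pos.2 hx
      exact mem_Ioi.2 (by positivity)
  have hcomp := (tendsto_rpow_mul_besselK τr hτ0).comp hmap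
  have hconst := hcomp.const_mul ((2:ℝ) ^ ((1:ℝ) - τr))
  have hval : (2:ℝ) ^ ((1:ℝ) - τr) * ((2:ℝ) ^ (τr - 1) * Real.Gamma τr) = Real.Gamma τr := by
    rw [← mul_assoc, ← Real.rpow_add (by norm_num : (0:ℝ) < 2)]
    norm_num
  rw [hval] at hconst
  have hevD : ∀ᶠ x in nhdsWithin (0:ℝ) (Ioi 0),
      (2:ℝ) ^ ((1:ℝ) - τr) * (((fun y => y ^ τr * besselK τr y) ∘ (fun x => 2 * Real.sqrt x)) x)
      = f x / x ^ (m - 1 : ℕ) := by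
    filter_upwards [self_mem_nhdsWithin] with x (hx : 0 < x)
    have hsx : 0 < Real.sqrt x := Real.sqrt_pos.2 hx
    have h1 : (2 * Real.sqrt x) ^ τr = (2:ℝ) ^ τr * x ^ (τr / 2) := by
      rw [Real.mul_rpow (by norm_num) (Real.sqrt_nonneg x), Real.sqrt_eq_rpow,
        ← Real.rpow_mul hx.le]
      rw [show (1:ℝ)/2 * τr = τr/2 by ring]
    have hnat : x ^ (m - 1 : ℕ) = x ^ ((m:ℝ) - 1) := by
      rw [← hmcast, Real.rpow_natCast]
    have hdiv : x ^ (s - 1) / x ^ ((m:ℝ) - 1) = x ^ (τr / 2) := by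
      rw [← Real.rpow_sub hx, hhalf]
    have h2 : (2:ℝ) ^ ((1:ℝ) - τr) * (2:ℝ) ^ τr = 2 := by
      rw [← Real.rpow_add (by norm_num : (0:ℝ) < 2)]
      norm_num
    calc (2:ℝ) ^ ((1:ℝ) - τr) * (((fun y => y ^ τr * besselK τr y) ∘
            (fun x => 2 * Real.sqrt x)) x)
        = ((2:ℝ) ^ ((1:ℝ) - τr) * (2:ℝ) ^ τr) *
            (x ^ (τr/2) * besselK τr (2 * Real.sqrt x)) := by
          simp only [Function.comp_apply]
          rw [h1]; ring
      _ = 2 * (x ^ (s-1) / x ^ ((m:ℝ)-1)) * besselK τr (2 * Real.sqrt x) := by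
          rw [h2, hdiv]; ring
      _ = f x / x ^ (m - 1 : ℕ) := by
          rw [hnat]; simp only [hfdef]; ring
  have hlimD : Tendsto (fun x => f x / x ^ (m - 1 : ℕ)) (nhdsWithin 0 (Ioi 0))
      (nhds (Real.Gamma τr)) := Tendsto.congr' hevD hconst
  have hratio := ratio_integral f m hm1 (Real.Gamma τr) (Real.Gamma_pos_of_pos hτ0)
    hmeas hlimD
  refine Tendsto.congr' ?_ hratio
  filter_upwards [self_mem_nhdsWithin] with ε (hε : 0 < ε)
  have hg1 : (0:ℝ) < Real.Gamma (NT:ℝ) := Real.Gamma_pos_of_pos (by exact_mod_cast hNT)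
  have hg2 : (0:ℝ) < Real.Gamma (NR:ℝ) := Real.Gamma_pos_of_pos (by exact_mod_cast hNR)
  have hC : Real.Gamma (NT:ℝ) * Real.Gamma (NR:ℝ) ≠ 0 := by positivity
  have hm0 : ((m:ℕ):ℝ) ≠ 0 := by
    have : m ≠ 0 := by omega
    exact_mod_cast this
  have hG : Real.Gamma τr ≠ 0 := (Real.Gamma_pos_of_pos hτ0).ne'
  have hε0 : ε ^ m ≠ 0 := pow_ne_zero _ hε.ne'
  show (∫ x in Ioc (0:ℝ) ε, f x) / (Real.Gamma τr * ε ^ m / m)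
      = (∫ x in Ioc (0:ℝ) ε, f x / (Real.Gamma (NT:ℝ) * Real.Gamma (NR:ℝ))) /
        (Real.Gamma τr * ε ^ m / (Real.Gamma (NT:ℝ) * Real.Gamma (NR:ℝ) * m))
  rw [integral_div]
  field_simp
end

section
/- For positive integers m ≠ n with τ = |m − n|, the CDF F(x) of the product of independent Gamma(m,1) and Gamma(n,1) random variables satisfies lim_{x→0⁺} F(x)/x^{min(m,n)} = Γ(τ)/(Γ(m)Γ(n) min(m,n)). -/
/-- The CDF of the product of independent Gamma(m,1) and Gamma(n,1) random variables,
via its density on `(0,∞)`. -/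
noncomputable def prodGammaCDF (m n : ℕ) (x : ℝ) : ℝ :=
  ∫ t in Set.Ioc (0 : ℝ) x,
    2 * t ^ (((m : ℝ) + n) / 2 - 1) * besselK |(m : ℝ) - n| (2 * Real.sqrt t) /
      (Real.Gamma m * Real.Gamma n)

open Set MeasureTheory Real Filter

/-- Auxiliary function: `Ĝ τ t = ∫₀^∞ e^{-s - max(t,0)/s} s^{τ-1} ds`. -/
noncomputable def besselAuxG (τ t : ℝ) : ℝ :=
  ∫ s in Set.Ioi (0 : ℝ), Real.exp (-s - max t 0 / s) * s ^ (τ - 1)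

lemma besselAuxG_meas (τ t : ℝ) :
    AEStronglyMeasurable (fun s : ℝ => Real.exp (-s - max t 0 / s) * s ^ (τ - 1))
      (volume.restrict (Ioi 0)) := by
  refine ContinuousOn.aestronglyMeasurable ?_ measurableSet_Ioi
  have h1 : ContinuousOn (fun s : ℝ => Real.exp (-s - max t 0 / s)) (Ioi 0) :=
    (continuousOn_id.neg.sub (continuousOn_const.div continuousOn_id
      fun s hs => ne_of_gt hs)).rexp
  exact h1.mul (continuousOn_id.rpow_const fun s hs => Or.inl (ne_of_gt hs))

lemma besselAuxG_integrand_nonneg (τ t : ℝ) (s : ℝ) (hs : 0 < s) :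
    0 ≤ Real.exp (-s - max t 0 / s) * s ^ (τ - 1) :=
  mul_nonneg (Real.exp_nonneg _) (Real.rpow_nonneg hs.le _)

lemma besselAuxG_integrand_le (τ : ℝ) {t : ℝ} (s : ℝ) (hs : 0 < s) :
    Real.exp (-s - max t 0 / s) * s ^ (τ - 1) ≤ Real.exp (-s) * s ^ (τ - 1) := by
  have h1 : Real.exp (-s - max t 0 / s) ≤ Real.exp (-s) := by
    apply Real.exp_le_exp.mpr
    have : 0 ≤ max t 0 / s := div_nonneg (le_max_right _ _) hs.le
    linarith
  exact mul_le_mul_of_nonneg_right h1 (Real.rpow_nonneg hs.le _)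

lemma besselAuxG_integrable {τ : ℝ} (hτ : 0 < τ) (t : ℝ) :
    IntegrableOn (fun s : ℝ => Real.exp (-s - max t 0 / s) * s ^ (τ - 1)) (Ioi 0) := by
  refine (Real.GammaIntegral_convergent hτ).mono' (besselAuxG_meas τ t) ?_
  filter_upwards [ae_restrict_mem measurableSet_Ioi] with s hs
  rw [Real.norm_eq_abs, abs_of_nonneg (besselAuxG_integrand_nonneg τ t s hs)]
  exact besselAuxG_integrand_le τ s hs

lemma besselAuxG_antitone {τ : ℝ} (hτ : 0 < τ) : Antitone (besselAuxG τ) := by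
  intro t₁ t₂ h
  refine setIntegral_mono_on (besselAuxG_integrable hτ t₂) (besselAuxG_integrable hτ t₁)
    measurableSet_Ioi fun s hs => ?_
  have hs' : 0 < s := hs
  have : -s - max t₂ 0 / s ≤ -s - max t₁ 0 / s := by
    have hd : max t₁ 0 / s ≤ max t₂ 0 / s :=
      div_le_div_of_nonneg_right (max_le_max h le_rfl) hs'.le
    linarith
  exact mul_le_mul_of_nonneg_right (Real.exp_le_exp.mpr this) (Real.rpow_nonneg hs'.le _)

lemma besselAuxG_le_Gamma {τ : ℝ} (hτ : 0 < τ) (t : ℝ) : besselAuxG τ t ≤ Real.Gamma τ := by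
  rw [Real.Gamma_eq_integral hτ]
  exact setIntegral_mono_on (besselAuxG_integrable hτ t) (Real.GammaIntegral_convergent hτ)
    measurableSet_Ioi fun s hs => besselAuxG_integrand_le τ s hs

lemma besselAuxG_nonneg (τ t : ℝ) : 0 ≤ besselAuxG τ t :=
  setIntegral_nonneg measurableSet_Ioi fun s hs => besselAuxG_integrand_nonneg τ t s hs

lemma besselAuxG_tendsto {τ : ℝ} (hτ : 0 < τ) :
    Tendsto (besselAuxG τ) (nhdsWithin 0 (Ioi 0)) (nhds (Real.Gamma τ)) := by
  rw [Real.Gamma_eq_integral hτ]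
  refine tendsto_integral_filter_of_dominated_convergence
    (fun s => Real.exp (-s) * s ^ (τ - 1))
    (Eventually.of_forall fun t => besselAuxG_meas τ t) ?_
    (Real.GammaIntegral_convergent hτ) ?_
  · filter_upwards with t
    filter_upwards [ae_restrict_mem measurableSet_Ioi] with s hs
    rw [Real.norm_eq_abs, abs_of_nonneg (besselAuxG_integrand_nonneg τ t s hs)]
    exact besselAuxG_integrand_le τ s hs
  · filter_upwards [ae_restrict_mem measurableSet_Ioi] with s hs
    have hc : ContinuousAt (fun t : ℝ => Real.exp (-s - max t 0 / s) * s ^ (τ - 1)) 0 :=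
      ((continuous_const.sub ((continuous_id.max continuous_const).div_const s)).rexp.mul
        continuous_const).continuousAt
    have h2 := hc.tendsto.mono_left (nhdsWithin_le_nhds (s := Ioi (0:ℝ)))
    simpa using h2

lemma besselK_identity {τ : ℝ} (hτ : 0 < τ) {x : ℝ} (hx : 0 < x) :
    besselAuxG τ x = x ^ (τ / 2) * (2 * besselK τ (2 * Real.sqrt x)) := by
  set c := Real.sqrt x with hcdef
  have hc : 0 < c := Real.sqrt_pos.mpr hx
  have hc2 : c * c = x := Real.mul_self_sqrt hx.le
  set f : ℝ → ℝ := fun u => c * Real.exp u with hf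
  have himg : f '' (univ : Set ℝ) = Ioi 0 := by
    ext y
    simp only [image_univ, mem_range, mem_Ioi, hf]
    constructor
    · rintro ⟨u, rfl⟩; exact mul_pos hc (Real.exp_pos u)
    · intro hy
      exact ⟨Real.log (y / c), by rw [Real.exp_log (div_pos hy hc)]; field_simp⟩
  have hderiv : ∀ u ∈ (univ : Set ℝ), HasDerivWithinAt f (c * Real.exp u) univ u :=
    fun u _ => ((Real.hasDerivAt_exp u).const_mul c).hasDerivWithinAt
  have hinj : InjOn f univ := by
    intro a _ b _ hab
    simpa [hf, hc.ne', Real.exp_eq_exp] using hab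
  have hpt : ∀ u : ℝ,
      |c * Real.exp u| • (Real.exp (-(c * Real.exp u) - x / (c * Real.exp u)) *
        (c * Real.exp u) ^ (τ - 1))
      = c ^ τ * (Real.exp (-(2 * c) * Real.cosh u) * Real.exp (τ * u)) := by
    intro u
    rw [smul_eq_mul, abs_of_pos (mul_pos hc (Real.exp_pos u))]
    have e1 : x / (c * Real.exp u) = c * Real.exp (-u) := by
      rw [Real.exp_neg, ← hc2]
      field_simp
    have e2 : -(c * Real.exp u) - c * Real.exp (-u) = -(2 * c) * Real.cosh u := by
      rw [Real.cosh_eq]; ring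
    have e3 : (c * Real.exp u) ^ (τ - 1) = c ^ (τ - 1) * Real.exp (u * (τ - 1)) := by
      rw [Real.mul_rpow hc.le (Real.exp_pos u).le,
        Real.rpow_def_of_pos (Real.exp_pos u), Real.log_exp]
    have e4 : c * c ^ (τ - 1) = c ^ τ := by
      nth_rewrite 1 [← Real.rpow_one c]
      rw [← Real.rpow_add hc]; ring_nf
    have e5 : Real.exp u * Real.exp (u * (τ - 1)) = Real.exp (τ * u) := by
      rw [← Real.exp_add]; ring_nf
    rw [e1, e2, e3, ← e4, ← e5]; ring
  have hG : besselAuxG τ x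
      = ∫ s in Ioi (0:ℝ), Real.exp (-s - x / s) * s ^ (τ - 1) := by
    unfold besselAuxG
    rw [max_eq_left hx.le]
  have key := integral_image_eq_integral_abs_deriv_smul MeasurableSet.univ hderiv hinj
    (fun s => Real.exp (-s - x / s) * s ^ (τ - 1))
  rw [himg, Measure.restrict_univ] at key
  have key2 : besselAuxG τ x
      = c ^ τ * ∫ u : ℝ, Real.exp (-(2 * c) * Real.cosh u) * Real.exp (τ * u) := by
    rw [hG, key, integral_congr_ae (Eventually.of_forall hpt), integral_const_mul]
  -- integrability of the transformed function
  have hIG : IntegrableOn (fun s => Real.exp (-s - x / s) * s ^ (τ - 1)) (Ioi (0:ℝ)) := by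
    have := besselAuxG_integrable hτ x
    refine this.congr_fun (fun s hs => by rw [max_eq_left hx.le]) measurableSet_Ioi
  have hInt : Integrable (fun u : ℝ => Real.exp (-(2 * c) * Real.cosh u) * Real.exp (τ * u)) := by
    have h := (integrableOn_image_iff_integrableOn_abs_deriv_smul MeasurableSet.univ hderiv hinj
      (fun s => Real.exp (-s - x / s) * s ^ (τ - 1))).mp (by rw [himg]; exact hIG)
    rw [integrableOn_univ] at h
    have h2 : Integrable (fun u : ℝ =>
        c ^ τ * (Real.exp (-(2 * c) * Real.cosh u) * Real.exp (τ * u))) := h.congr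
      (Eventually.of_forall hpt)
    have hcτ : c ^ τ ≠ 0 := (Real.rpow_pos_of_pos hc τ).ne'
    have h3 := h2.const_mul (c ^ τ)⁻¹
    refine h3.congr (Eventually.of_forall fun u => ?_)
    field_simp
  -- relate to besselK
  have hB : besselK τ (2 * c)
      = (1/2) * ∫ u : ℝ, Real.exp (-(2 * c) * Real.cosh u) * Real.exp (τ * u) := by
    have hIneg : Integrable (fun u : ℝ =>
        Real.exp (-(2 * c) * Real.cosh u) * Real.exp (-(τ * u))) := by
      have := hInt.comp_neg
      refine this.congr (Eventually.of_forall fun u => ?_)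
      simp [Real.cosh_neg, mul_neg]
    have hsplit : ∀ u : ℝ, Real.exp (-(2 * c) * Real.cosh u) * Real.cosh (τ * u)
        = (Real.exp (-(2 * c) * Real.cosh u) * Real.exp (τ * u)
          + Real.exp (-(2 * c) * Real.cosh u) * Real.exp (-(τ * u))) / 2 := by
      intro u; rw [Real.cosh_eq (τ * u)]; ring
    unfold besselK
    rw [setIntegral_congr_fun measurableSet_Ioi (fun u _ => hsplit u), integral_div,
      integral_add hInt.integrableOn hIneg.integrableOn]
    have hneg : ∫ u in Ioi (0:ℝ), Real.exp (-(2 * c) * Real.cosh u) * Real.exp (-(τ * u))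
        = ∫ u in Iic (0:ℝ), Real.exp (-(2 * c) * Real.cosh u) * Real.exp (τ * u) := by
      have := integral_comp_neg_Ioi (0:ℝ)
        (fun u => Real.exp (-(2 * c) * Real.cosh u) * Real.exp (τ * u))
      rw [neg_zero] at this
      rw [← this]
      refine setIntegral_congr_fun measurableSet_Ioi (fun u _ => ?_)
      simp [Real.cosh_neg, mul_neg]
    rw [hneg, add_comm, intervalIntegral.integral_Iic_add_Ioi hInt.integrableOn hInt.integrableOn]
    ring
  rw [key2, hB]
  have hcτx : c ^ τ = x ^ (τ / 2) := by
    rw [hcdef, Real.sqrt_eq_rpow, ← Real.rpow_mul hx.le]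
    congr 1
    ring
  rw [hcτx]; ring

open intervalIntegral in
lemma pow_setIntegral_Ioc {k : ℕ} (hk1 : 1 ≤ k) {x : ℝ} (hx : 0 < x) :
    (∫ t in Ioc (0:ℝ) x, t ^ (k - 1 : ℕ)) = x ^ k / k := by
  rw [← integral_of_le hx.le, integral_pow, Nat.sub_add_cancel hk1,
    zero_pow (by omega : k ≠ 0)]
  have hkcast : ((k - 1 : ℕ) : ℝ) = (k:ℝ) - 1 := by push_cast [Nat.cast_sub hk1]; ring
  rw [hkcast]
  ring

theorem stmt_9 (m n : ℕ) (hm : 0 < m) (hn : 0 < n) (hmn : m ≠ n) :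
    Filter.Tendsto (fun x : ℝ => prodGammaCDF m n x / x ^ (min m n : ℕ))
      (nhdsWithin 0 (Set.Ioi 0))
      (nhds (Real.Gamma |(m : ℝ) - n| / (Real.Gamma m * Real.Gamma n * (min m n : ℕ)))) := by
  set k : ℕ := min m n with hkdef
  have hk1 : 1 ≤ k := le_min hm hn
  have hk0 : (0:ℝ) < (k:ℝ) := by exact_mod_cast lt_of_lt_of_le Nat.zero_lt_one hk1
  set τ : ℝ := |(m : ℝ) - n| with hτdef
  have hτ : 0 < τ := abs_pos.mpr (sub_ne_zero.mpr (by exact_mod_cast hmn))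
  set C : ℝ := Real.Gamma m * Real.Gamma n with hCdef
  have hC : 0 < C := mul_pos (Real.Gamma_pos_of_pos (by exact_mod_cast hm))
    (Real.Gamma_pos_of_pos (by exact_mod_cast hn))
  have hexp : ((m:ℝ) + n) / 2 - 1 + -(τ / 2) = (k:ℝ) - 1 := by
    rcases le_total m n with h | h
    · have h1 : τ = (n:ℝ) - m := by
        rw [hτdef, abs_of_nonpos (by simp [Nat.cast_le, h] : ((m:ℝ) - n) ≤ 0)]; ring
      have h2 : k = m := min_eq_left h
      rw [h1, h2]; ring
    · have h1 : τ = (m:ℝ) - n := by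
        rw [hτdef, abs_of_nonneg (by simp [Nat.cast_le, h] : (0:ℝ) ≤ (m:ℝ) - n)]
      have h2 : k = n := min_eq_right h
      rw [h1, h2]; ring
  have hkcast : ((k - 1 : ℕ) : ℝ) = (k:ℝ) - 1 := by
    push_cast [Nat.cast_sub hk1]; ring
  -- rewrite the CDF
  have hCDF : ∀ x : ℝ, prodGammaCDF m n x
      = (∫ t in Ioc (0:ℝ) x, t ^ (k - 1 : ℕ) * besselAuxG τ t) / C := by
    intro x
    unfold prodGammaCDF
    rw [integral_div]
    congr 1
    refine setIntegral_congr_fun measurableSet_Ioc (fun t ht => ?_)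
    have ht0 : 0 < t := ht.1
    have h2K : 2 * besselK τ (2 * Real.sqrt t) = t ^ (-(τ / 2)) * besselAuxG τ t := by
      rw [besselK_identity hτ ht0, ← mul_assoc, ← Real.rpow_add ht0]
      simp
    calc 2 * t ^ (((m:ℝ) + n) / 2 - 1) * besselK τ (2 * Real.sqrt t)
        = t ^ (((m:ℝ) + n) / 2 - 1) * (2 * besselK τ (2 * Real.sqrt t)) := by ring
      _ = t ^ (((m:ℝ) + n) / 2 - 1) * (t ^ (-(τ / 2)) * besselAuxG τ t) := by rw [h2K]
      _ = t ^ (((m:ℝ) + n) / 2 - 1 + -(τ / 2)) * besselAuxG τ t := by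
          rw [← mul_assoc, ← Real.rpow_add ht0]
      _ = t ^ ((k:ℝ) - 1) * besselAuxG τ t := by rw [hexp]
      _ = t ^ (k - 1 : ℕ) * besselAuxG τ t := by
          rw [← Real.rpow_natCast t (k - 1), hkcast]
  have hGmeas : Measurable (besselAuxG τ) := (besselAuxG_antitone hτ).measurable
  have hfmeas : Measurable (fun t : ℝ => t ^ (k - 1 : ℕ) * besselAuxG τ t) :=
    (measurable_id.pow_const (k - 1)).mul hGmeas
  -- integrability on Ioc 0 x
  have hfint : ∀ x : ℝ, 0 < x →
      IntegrableOn (fun t : ℝ => t ^ (k - 1 : ℕ) * besselAuxG τ t) (Ioc 0 x) := by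
    intro x hx
    refine Measure.integrableOn_of_bounded (M := x ^ (k - 1 : ℕ) * Real.Gamma τ)
      measure_Ioc_lt_top.ne hfmeas.aestronglyMeasurable ?_
    filter_upwards [ae_restrict_mem measurableSet_Ioc] with t ht
    rw [Real.norm_eq_abs, abs_of_nonneg
      (mul_nonneg (pow_nonneg ht.1.le _) (besselAuxG_nonneg τ t))]
    exact mul_le_mul (pow_le_pow_left₀ ht.1.le ht.2 _) (besselAuxG_le_Gamma hτ t)
      (besselAuxG_nonneg τ t) (pow_nonneg hx.le _)
  have hcint : ∀ (x a : ℝ), IntegrableOn (fun t : ℝ => t ^ (k - 1 : ℕ) * a) (Ioc 0 x) :=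
    fun x a => (((continuous_pow (k - 1)).mul continuous_const).integrableOn_Icc (a := (0:ℝ)) (b := x)).mono_set Ioc_subset_Icc_self
  have hpoly : ∀ x : ℝ, 0 < x →
      (∫ t in Ioc (0:ℝ) x, t ^ (k - 1 : ℕ)) = x ^ k / k := by
    intro x hx
    exact pow_setIntegral_Ioc hk1 hx
  -- bounds
  have hup : ∀ x : ℝ, 0 < x →
      (∫ t in Ioc (0:ℝ) x, t ^ (k - 1 : ℕ) * besselAuxG τ t)
        ≤ Real.Gamma τ * (x ^ k / k) := by
    intro x hx
    have h1 : (∫ t in Ioc (0:ℝ) x, t ^ (k - 1 : ℕ) * besselAuxG τ t)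
        ≤ ∫ t in Ioc (0:ℝ) x, t ^ (k - 1 : ℕ) * Real.Gamma τ := by
      refine setIntegral_mono_on (hfint x hx) (hcint x _) measurableSet_Ioc fun t ht => ?_
      exact mul_le_mul_of_nonneg_left (besselAuxG_le_Gamma hτ t) (pow_nonneg ht.1.le _)
    rwa [integral_mul_const, hpoly x hx, mul_comm] at h1
  have hlow : ∀ x : ℝ, 0 < x →
      besselAuxG τ x * (x ^ k / k)
        ≤ ∫ t in Ioc (0:ℝ) x, t ^ (k - 1 : ℕ) * besselAuxG τ t := by
    intro x hx
    have h1 : (∫ t in Ioc (0:ℝ) x, t ^ (k - 1 : ℕ) * besselAuxG τ x)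
        ≤ ∫ t in Ioc (0:ℝ) x, t ^ (k - 1 : ℕ) * besselAuxG τ t := by
      refine setIntegral_mono_on (hcint x _) (hfint x hx) measurableSet_Ioc fun t ht => ?_
      exact mul_le_mul_of_nonneg_left (besselAuxG_antitone hτ ht.2) (pow_nonneg ht.1.le _)
    rwa [integral_mul_const, hpoly x hx, mul_comm] at h1
  -- squeeze
  have hgoalval : Real.Gamma τ / (C * k) = Real.Gamma τ / k / C := by
    rw [div_div, mul_comm]
  rw [show (Real.Gamma |(m:ℝ) - n| / (Real.Gamma m * Real.Gamma n * (min m n : ℕ)))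
      = Real.Gamma τ / k / C by rw [← hgoalval]]
  have hlb : Tendsto (fun x : ℝ => besselAuxG τ x / k / C) (nhdsWithin 0 (Ioi 0))
      (nhds (Real.Gamma τ / k / C)) :=
    ((besselAuxG_tendsto hτ).div_const _).div_const _
  refine tendsto_of_tendsto_of_tendsto_of_le_of_le' hlb tendsto_const_nhds ?_ ?_
  · filter_upwards [self_mem_nhdsWithin] with x hx
    have hx : (0:ℝ) < x := hx
    have hxk : (0:ℝ) < x ^ k := pow_pos hx k
    rw [hCDF x, div_div, div_div]
    rw [div_le_div_iff₀ (mul_pos hk0 hC) (mul_pos hC hxk)]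
    have h2 := mul_le_mul_of_nonneg_right (hlow x hx) (mul_pos hk0 hC).le
    calc besselAuxG τ x * (C * x ^ k)
        = besselAuxG τ x * (x ^ k / k) * (k * C) := by field_simp
      _ ≤ (∫ t in Ioc (0:ℝ) x, t ^ (k - 1 : ℕ) * besselAuxG τ t) * (k * C) := h2
  · filter_upwards [self_mem_nhdsWithin] with x hx
    have hx : (0:ℝ) < x := hx
    have hxk : (0:ℝ) < x ^ k := pow_pos hx k
    rw [hCDF x, div_div, div_div]
    rw [div_le_div_iff₀ (mul_pos hC hxk) (mul_pos hk0 hC)]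
    have h2 := mul_le_mul_of_nonneg_right (hup x hx) (mul_pos hk0 hC).le
    calc (∫ t in Ioc (0:ℝ) x, t ^ (k - 1 : ℕ) * besselAuxG τ t) * (k * C)
        ≤ Real.Gamma τ * (x ^ k / k) * (k * C) := h2
      _ = Real.Gamma τ * (C * x ^ k) := by field_simp
end

section
/- Let P_out(γ) = ∏_{k=1}^K (c (2^R−1)/γ)^{N_T} ln(γ) / (N_T Γ(N_T)²) with all constants positive. Then lim_{γ→∞} −ln P_out(γ)/ln γ = K·N_T. -/
theorem stmt_13 (K NT : ℕ) (hK : 0 < K) (hNT : 0 < NT) (c R : ℝ) (hc : 0 < c) (hR : 0 < R) :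
    Filter.Tendsto
      (fun γ : ℝ =>
        -Real.log (∏ _k : Fin K,
            (c * ((2 : ℝ) ^ R - 1) / γ) ^ NT * Real.log γ / ((NT : ℝ) * Real.Gamma NT ^ 2)) /
          Real.log γ)
      Filter.atTop (nhds ((K : ℝ) * NT)) := by
  set B : ℝ := c * ((2 : ℝ) ^ R - 1) with hB
  have hBpos : 0 < B := by
    apply mul_pos hc
    have : (1 : ℝ) < (2 : ℝ) ^ R := by
      rw [show (1:ℝ) = (2:ℝ) ^ (0:ℝ) by simp]
      exact Real.rpow_lt_rpow_left_iff (by norm_num) |>.mpr hR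
    linarith
  set C : ℝ := (NT : ℝ) * Real.Gamma NT ^ 2 with hC
  have hCpos : 0 < C := by
    apply mul_pos (by exact_mod_cast hNT)
    have hG : (0:ℝ) < Real.Gamma NT := Real.Gamma_pos_of_pos (by exact_mod_cast hNT)
    positivity
  have hlog : Filter.Tendsto Real.log Filter.atTop Filter.atTop := Real.tendsto_log_atTop
  have hinv : Filter.Tendsto (fun γ : ℝ => (Real.log γ)⁻¹) Filter.atTop (nhds 0) :=
    hlog.inv_tendsto_atTop
  have hll : Filter.Tendsto (fun γ : ℝ => Real.log (Real.log γ) / Real.log γ)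
      Filter.atTop (nhds 0) := by
    have h0 : Filter.Tendsto (fun x : ℝ => Real.log x / x) Filter.atTop (nhds 0) :=
      Real.isLittleO_log_id_atTop.tendsto_div_nhds_zero
    exact h0.comp hlog
  have hg : Filter.Tendsto
      (fun γ : ℝ => (K : ℝ) * NT
        + ((K : ℝ) * NT * (-Real.log B) + (K : ℝ) * Real.log C) * (Real.log γ)⁻¹
        - (K : ℝ) * (Real.log (Real.log γ) / Real.log γ))
      Filter.atTop (nhds ((K : ℝ) * NT)) := by
    have h1 := ((tendsto_const_nhds (x := (K : ℝ) * NT) (f := Filter.atTop)).add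
        (hinv.const_mul ((K : ℝ) * NT * (-Real.log B) + (K : ℝ) * Real.log C))).sub
        (hll.const_mul (K : ℝ))
    simpa using h1
  refine hg.congr' ?_
  filter_upwards [Filter.eventually_gt_atTop (1 : ℝ)] with γ hγ1
  have hγ0 : (0 : ℝ) < γ := by linarith
  have hlγ : 0 < Real.log γ := Real.log_pos hγ1
  have hA : (0 : ℝ) < B / γ := div_pos hBpos hγ0
  have hprod : (∏ _k : Fin K, (B / γ) ^ NT * Real.log γ / C)
      = ((B / γ) ^ NT * Real.log γ / C) ^ K := by
    simp [Finset.prod_const, div_pow]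
  have hlogt : Real.log ((B / γ) ^ NT * Real.log γ / C)
      = (NT : ℝ) * (Real.log B - Real.log γ) + Real.log (Real.log γ) - Real.log C := by
    rw [Real.log_div (by positivity) (ne_of_gt hCpos),
      Real.log_mul (by positivity) (ne_of_gt hlγ), Real.log_pow,
      Real.log_div (ne_of_gt hBpos) (ne_of_gt hγ0)]
  rw [hprod, Real.log_pow, hlogt]
  field_simp
  ring
end
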